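/- Let n, e and the class K^{n,e} be as defined, and let H ∈ K^{n,e}. If q₀ = (V ∪ V⁰, U⁰, X⁰, h⁰₁,...,h⁰_n) and q₁ = (V ∪ V¹, U¹, X¹, h¹₁,...,h¹_n) are two order-isomorphic conditions of the poset Q (isomorphic via the unique order isomorphism fixing V), with V < V⁰ < V¹ (every element of V below every element of V⁰, and every element of V⁰ below every element of V¹), then q₀ and q₁ are compatible in Q: their coordinatewise union is a condition. -/

import Mathlib

open Cardinal Ordinal Set

/-- A finite structure `(V, <, U, X, h₁, …, h_n)` of the kind appearing in `K^{n,e}`: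
`V` is a finite set of naturals (carrying the natural linear order), `U ⊆ V`,
`X` a set of edges on `U`, and `h i` the `i`-th selector function. -/
structure NEStruct (n : ℕ) where
  V : Finset ℕ
  U : Finset ℕ
  X : Finset (Sym2 ℕ)
  h : Fin n → ℕ → ℕ

namespace NEStruct

variable {n : ℕ}

/-- Well-formedness: `U ⊆ V`, `X` is a loopless graph on `U`, and for `x ∈ U` the values
`h 0 x < h 1 x < ⋯ < h (n-1) x = x` all lie in `V`. -/
def WF (H : NEStruct n) : Prop :=
  H.U ⊆ H.V ∧ (∀ e ∈ H.X, ∀ v ∈ e, v ∈ H.U) ∧ (∀ e ∈ H.X, ¬ e.IsDiag) ∧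
    ∀ x ∈ H.U, (∀ i, H.h i x ∈ H.V) ∧ StrictMono (fun i => H.h i x) ∧
      ∀ i : Fin n, (i : ℕ) = n - 1 → H.h i x = x

/-- `f` is an induced (order-preserving) embedding of `H` into `H'`. -/
def IndEmb (f : ℕ → ℕ) (H H' : NEStruct n) : Prop :=
  Set.MapsTo f ↑H.V ↑H'.V ∧ StrictMonoOn f ↑H.V ∧
    (∀ x ∈ H.V, (x ∈ H.U ↔ f x ∈ H'.U)) ∧
    (∀ x ∈ H.U, ∀ y ∈ H.U, (s(x, y) ∈ H.X ↔ s(f x, f y) ∈ H'.X)) ∧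
    ∀ i, ∀ x ∈ H.U, f (H.h i x) = H'.h i (f x)

/-- The canonical base structure: `V = {1, …, n}`, `U = {n}`, `X = ∅`, `h i n = i + 1`. -/
def base (n : ℕ) : NEStruct n :=
  ⟨Finset.Icc 1 n, {n}, ∅, fun i _ => (i : ℕ) + 1⟩

/-- `H` is isomorphic to the base structure. -/
def IsBase (H : NEStruct n) : Prop :=
  ∃ f, IndEmb f (base n) H ∧ H.V = (base n).V.image f

/-- `H'` is an edgeless amalgamation `H +ₓ H`: two copies of `H` glued along the part
below `x`, the parts from `x` on being ordered one after the other, with no new edges. -/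
def IsPlus (H H' : NEStruct n) (x : ℕ) : Prop :=
  x ∈ H.V ∧ ∃ f₀ f₁ : ℕ → ℕ, IndEmb f₀ H H' ∧ IndEmb f₁ H H' ∧
    H'.V = H.V.image f₀ ∪ H.V.image f₁ ∧
    (∀ y ∈ H.V, y < x → f₀ y = f₁ y) ∧
    (∀ y ∈ H.V, x ≤ y → ∀ z ∈ H.V, x ≤ z → f₀ y < f₁ z) ∧
    H'.X = H.X.image (Sym2.map f₀) ∪ H.X.image (Sym2.map f₁)

/-- `H'` is a one-edge amalgamation `H *_y H` along `e`: the two copies of `H` interlace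
according to `e` via blocks `B 0 < B 1 < ⋯ < B (2n)` (copy `ε` occupying `B 0` together
with the blocks whose index has `e`-value `ε`), the selector values of the two copies
`y₀ = f₀ y`, `y₁ = f₁ y` of `y` are the minima of the corresponding blocks, and the only
new edge is `{y₀, y₁}`. -/
def IsStar (e : Fin (2 * n) → Bool) (H H' : NEStruct n) (y : ℕ) : Prop :=
  y ∈ H.U ∧ ∃ f₀ f₁ : ℕ → ℕ, IndEmb f₀ H H' ∧ IndEmb f₁ H H' ∧
    H'.V = H.V.image f₀ ∪ H.V.image f₁ ∧
    H'.X = H.X.image (Sym2.map f₀) ∪ H.X.image (Sym2.map f₁) ∪ {s(f₀ y, f₁ y)} ∧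
    ∃ B : Fin (2 * n + 1) → Finset ℕ,
      (∀ i j : Fin (2 * n + 1), i < j → ∀ a ∈ B i, ∀ b ∈ B j, a < b) ∧
      H.V.image f₀ = B 0 ∪
        Finset.univ.biUnion (fun i : Fin (2 * n) => if e i = false then B i.succ else ∅) ∧
      H.V.image f₁ = B 0 ∪
        Finset.univ.biUnion (fun i : Fin (2 * n) => if e i = true then B i.succ else ∅) ∧
      (∀ (i : Fin n) (j : Fin (2 * n)), e j = false →
        (Finset.univ.filter (fun k : Fin (2 * n) => k < j ∧ e k = false)).card = (i : ℕ) →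
        H'.h i (f₀ y) ∈ B j.succ ∧ ∀ z ∈ B j.succ, H'.h i (f₀ y) ≤ z) ∧
      (∀ (i : Fin n) (j : Fin (2 * n)), e j = true →
        (Finset.univ.filter (fun k : Fin (2 * n) => k < j ∧ e k = true)).card = (i : ℕ) →
        H'.h i (f₁ y) ∈ B j.succ ∧ ∀ z ∈ B j.succ, H'.h i (f₁ y) ≤ z)

end NEStruct

/-- The class `K^{n,e}`: generated from the base structure by edgeless and one-edge
amalgamations (closed under isomorphic copies via the embedding-based definitions). -/
inductive InK (n : ℕ) (e : Fin (2 * n) → Bool) : NEStruct n → Prop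
  | base {H : NEStruct n} : H.IsBase → InK n e H
  | plus {H H' : NEStruct n} {x : ℕ} : InK n e H → H.IsPlus H' x → InK n e H'
  | star {H H' : NEStruct n} {y : ℕ} : InK n e H → NEStruct.IsStar e H H' y → InK n e H'

/-- A (potential) condition of the poset `Q`: a structure `(V, U, X, h₁, …, h_n)` on a
linearly ordered vertex set `α` (in the application, `α` is the type of ordinals below
`λ⁺`). -/
structure QStruct (n : ℕ) (α : Type) where
  V : Set α
  U : Set α
  X : Set (Sym2 α)
  h : Fin n → α → α

/-- The finite substructure of `q` on `s` embeds (as an induced substructure, preserving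
order, `U`, `X` and the selectors insofar as they are present in `s`) into some member of
`K^{n,e}`. -/
def FinEmbeds (n : ℕ) (e : Fin (2 * n) → Bool) {α : Type} [LinearOrder α]
    (q : QStruct n α) (s : Finset α) : Prop :=
  ∃ (H : NEStruct n) (f : α → ℕ), InK n e H ∧ StrictMonoOn f ↑s ∧
    (∀ x ∈ s, f x ∈ H.V) ∧
    (∀ x ∈ s, (x ∈ q.U ∧ ∀ i, q.h i x ∈ s) →
      f x ∈ H.U ∧ ∀ i, f (q.h i x) = H.h i (f x)) ∧
    (∀ x ∈ s, ∀ y ∈ s, (x ∈ q.U ∧ ∀ i, q.h i x ∈ s) → (y ∈ q.U ∧ ∀ i, q.h i y ∈ s) →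
      (s(x, y) ∈ q.X ↔ s(f x, f y) ∈ H.X))

/-- `q` is a condition of the poset `Q = Q_{n,e,λ}`: `V` has size `< λ`, `U ⊆ V`, `X` is a
loopless graph on `U`, `h 0 x < ⋯ < h (n-1) x = x ` lie in `V` for `x ∈ U`, and every
finite substructure of `q` is a substructure of some element of `K^{n,e}`. -/
def IsCond (n : ℕ) (e : Fin (2 * n) → Bool) (lam : Cardinal.{0}) {α : Type}
    [LinearOrder α] (q : QStruct n α) : Prop :=
  Cardinal.mk q.V < lam ∧ q.U ⊆ q.V ∧
    (∀ ed ∈ q.X, ∀ v ∈ ed, v ∈ q.U) ∧ (∀ ed ∈ q.X, ¬ ed.IsDiag) ∧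
    (∀ x ∈ q.U, (∀ i, q.h i x ∈ q.V) ∧ StrictMono (fun i => q.h i x) ∧
      ∀ i : Fin n, (i : ℕ) = n - 1 → q.h i x = x) ∧
    ∀ s : Finset α, ↑s ⊆ q.V → FinEmbeds n e q s

/-- The extension order of `Q`: `q' ≤ q` iff `q'` end-extends `q`. -/
def QLe {n : ℕ} {α : Type} (q' q : QStruct n α) : Prop :=
  q.V ⊆ q'.V ∧ q.U = q'.U ∩ q.V ∧
    q.X = {ed ∈ q'.X | ∀ v ∈ ed, v ∈ q.V} ∧
    ∀ i, ∀ x ∈ q.U, q'.h i x = q.h i x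

namespace NEStruct

theorem good_step {n : ℕ} {H H' : NEStruct n}
    (ih : ∀ u ∈ H.U, u ∈ H.V → (∀ i, H.h i u ∈ H.V) ∧ StrictMono (fun i => H.h i u) ∧
      ∀ i : Fin n, (i : ℕ) = n - 1 → H.h i u = u)
    {f : ℕ → ℕ} (emb : IndEmb f H H') {v : ℕ} (hv : v ∈ H.V) (huU : f v ∈ H'.U) :
    (∀ i, H'.h i (f v) ∈ H'.V) ∧ StrictMono (fun i => H'.h i (f v)) ∧
      ∀ i : Fin n, (i : ℕ) = n - 1 → H'.h i (f v) = f v := by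
  obtain ⟨hmap, hmono, hUiff, hXiff, hh⟩ := emb
  have hvU : v ∈ H.U := (hUiff v hv).mpr huU
  obtain ⟨h1, h2, h3⟩ := ih v hvU hv
  refine ⟨?_, ?_, ?_⟩
  · intro i; rw [← hh i v hvU]; exact hmap (h1 i)
  · intro i j hij
    simp only [← hh _ v hvU]
    exact hmono (h1 i) (h1 j) (h2 hij)
  · intro i hi; rw [← hh i v hvU, h3 i hi]

/-- Lemma A: in any member of `K^{n,e}`, every point of `U ∩ V` has good selector values. -/
theorem good_of_inK {n : ℕ} (hn : 1 ≤ n) {e : Fin (2 * n) → Bool} {H : NEStruct n}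
    (hK : InK n e H) :
    ∀ u ∈ H.U, u ∈ H.V → (∀ i, H.h i u ∈ H.V) ∧ StrictMono (fun i => H.h i u) ∧
      ∀ i : Fin n, (i : ℕ) = n - 1 → H.h i u = u := by
  induction hK with
  | base hB =>
    obtain ⟨f, ⟨hmap, hmono, hUiff, hXiff, hh⟩, hVimg⟩ := hB
    intro u huU huV
    rw [hVimg] at huV
    obtain ⟨x, hx, rfl⟩ := Finset.mem_image.mp huV
    have hx' : 1 ≤ x ∧ x ≤ n := by
      have : x ∈ Finset.Icc 1 n := hx
      simpa using this
    have hnU : x ∈ (base n).U := (hUiff x hx).mpr huU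
    have hxn : x = n := by
      have : x ∈ ({n} : Finset ℕ) := hnU
      simpa using this
    have hhn := fun i : Fin n => (hh i x hnU).symm
    have hmem : ∀ i : Fin n, ((i : ℕ) + 1) ∈ (base n).V := by
      intro i
      have := i.isLt
      show _ ∈ Finset.Icc 1 n
      simp
    refine ⟨?_, ?_, ?_⟩
    · intro i
      rw [hhn i, hVimg]
      exact Finset.mem_image_of_mem f (hmem i)
    · intro i j hij
      simp only [fun i : Fin n => hhn i]
      show f ((i : ℕ) + 1) < f ((j : ℕ) + 1)
      exact hmono (Finset.mem_coe.mpr (hmem i)) (Finset.mem_coe.mpr (hmem j))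
        (by have := Fin.lt_def.mp hij; omega)
    · intro i hi
      rw [hhn i]
      show f ((i : ℕ) + 1) = f x
      congr 1
      omega
  | plus hK hP ih =>
    obtain ⟨hc, f₀, f₁, emb₀, emb₁, hV', hagree, hord, hX'⟩ := hP
    intro u huU huV
    rw [hV'] at huV
    rcases Finset.mem_union.mp huV with h | h
    · obtain ⟨v, hv, rfl⟩ := Finset.mem_image.mp h
      exact good_step ih emb₀ hv huU
    · obtain ⟨v, hv, rfl⟩ := Finset.mem_image.mp h
      exact good_step ih emb₁ hv huU
  | star hK hS ih =>
    obtain ⟨hy, f₀, f₁, emb₀, emb₁, hV', hX', hB⟩ := hS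
    intro u huU huV
    rw [hV'] at huV
    rcases Finset.mem_union.mp huV with h | h
    · obtain ⟨v, hv, rfl⟩ := Finset.mem_image.mp h
      exact good_step ih emb₀ hv huU
    · obtain ⟨v, hv, rfl⟩ := Finset.mem_image.mp h
      exact good_step ih emb₁ hv huU

end NEStruct
theorem selLe {n : ℕ} (hn : 1 ≤ n) {β : Type*} [LinearOrder β] {f : Fin n → β} {x : β}
    (hmono : StrictMono f) (hlast : ∀ i : Fin n, (i : ℕ) = n - 1 → f i = x) :
    ∀ i, f i ≤ x := by
  intro i
  have hl : f ⟨n - 1, by omega⟩ = x := hlast _ (by simp)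
  rcases eq_or_lt_of_le (show (i : ℕ) ≤ n - 1 by have := i.isLt; omega) with h | h
  · exact le_of_eq (by rw [← hl]; exact congrArg f (Fin.ext h))
  · exact hl ▸ le_of_lt (hmono (show i < ⟨n - 1, by omega⟩ from h))

namespace NEStruct

variable {n : ℕ}

/-- The second-copy embedding used for the edgeless amalgamation. -/
def two (H : NEStruct n) (c : ℕ) : ℕ → ℕ :=
  fun m => if m ∈ H.V ∧ m < c then 3 * m else 3 * m + 1 + 3 * (H.V.sup id)

/-- An explicit edgeless amalgamation `H +_c H`. -/
def dbl (H : NEStruct n) (c : ℕ) : NEStruct n where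
  V := H.V.image (fun m => 3 * m) ∪ H.V.image (two H c)
  U := H.U.image (fun m => 3 * m) ∪ H.U.image (two H c)
  X := H.X.image (Sym2.map (fun m => 3 * m)) ∪ H.X.image (Sym2.map (two H c))
  h := fun i m => if m % 3 = 0 then 3 * H.h i (m / 3)
       else two H c (H.h i ((m - 1 - 3 * (H.V.sup id)) / 3))

theorem two_eq_of (H : NEStruct n) {c m : ℕ} (h1 : m ∈ H.V) (h2 : m < c) :
    two H c m = 3 * m := by simp [two, h1, h2]

theorem two_eq_of_not (H : NEStruct n) {c m : ℕ} (h : ¬ (m ∈ H.V ∧ m < c)) :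
    two H c m = 3 * m + 1 + 3 * (H.V.sup id) := by simp only [two, if_neg h]

theorem two_shape (H : NEStruct n) (c : ℕ) (m : ℕ) :
    two H c m = 3 * m ∨ two H c m = 3 * m + 1 + 3 * (H.V.sup id) := by
  unfold two; split
  · exact Or.inl rfl
  · exact Or.inr rfl

theorem eq_three_of_two (H : NEStruct n) {c m a : ℕ} (h : two H c m = 3 * a) :
    m ∈ H.V ∧ m < c ∧ m = a := by
  unfold two at h
  split at h
  · next hc => exact ⟨hc.1, hc.2, by omega⟩
  · omega

theorem two_monoOn (H : NEStruct n) (c : ℕ) : StrictMonoOn (two H c) ↑H.V := by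
  intro a ha b hb hab
  have ha' : a ∈ H.V := ha
  have hb' : b ∈ H.V := hb
  unfold two
  split <;> split <;> simp_all <;> omega

theorem le_supV (H : NEStruct n) {m : ℕ} (h : m ∈ H.V) : m ≤ H.V.sup id :=
  Finset.le_sup (f := id) h

theorem dbl_Uback (H : NEStruct n) (c : ℕ) {g : ℕ → ℕ}
    (hg : ∀ m, g m = 3 * m ∨ g m = 3 * m + 1 + 3 * (H.V.sup id)) :
    ∀ x, g x ∈ (dbl H c).U → x ∈ H.U := by
  intro x hmem
  rcases Finset.mem_union.mp hmem with h | h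
  · obtain ⟨u, hu, hequ⟩ := Finset.mem_image.mp h
    have h3u : 3 * u = g x := hequ
    have := hg x
    have : u = x := by omega
    exact this ▸ hu
  · obtain ⟨u, hu, hequ⟩ := Finset.mem_image.mp h
    have hsu := two_shape H c u
    have := hg x
    have : u = x := by omega
    exact this ▸ hu

theorem dbl_Xback (H : NEStruct n) (c : ℕ) {g : ℕ → ℕ}
    (hg : ∀ m, g m = 3 * m ∨ g m = 3 * m + 1 + 3 * (H.V.sup id)) :
    ∀ x y, s(g x, g y) ∈ (dbl H c).X → s(x, y) ∈ H.X := by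
  intro x y hmem
  have hgx := hg x
  have hgy := hg y
  rcases Finset.mem_union.mp hmem with h | h
  · obtain ⟨ed, hed, heq⟩ := Finset.mem_image.mp h
    induction ed using Sym2.inductionOn with
    | hf a b =>
      simp only [Sym2.map_pair_eq, Sym2.eq_iff] at heq
      have key : s(x, y) = s(a, b) := by rw [Sym2.eq_iff]; omega
      rwa [key]
  · obtain ⟨ed, hed, heq⟩ := Finset.mem_image.mp h
    induction ed using Sym2.inductionOn with
    | hf a b =>
      simp only [Sym2.map_pair_eq, Sym2.eq_iff] at heq
      have hsa := two_shape H c a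
      have hsb := two_shape H c b
      have key : s(x, y) = s(a, b) := by rw [Sym2.eq_iff]; omega
      rwa [key]

theorem dbl_X_cross (H : NEStruct n) (c : ℕ) {u w : ℕ}
    (h : s(3 * u, w) ∈ (dbl H c).X) (hw : w % 3 ≠ 0) : u ∈ H.V ∧ u < c := by
  rcases Finset.mem_union.mp h with h' | h'
  · obtain ⟨ed, hed, heq⟩ := Finset.mem_image.mp h'
    induction ed using Sym2.inductionOn with
    | hf a b =>
      simp only [Sym2.map_pair_eq, Sym2.eq_iff] at heq
      omega
  · obtain ⟨ed, hed, heq⟩ := Finset.mem_image.mp h'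
    induction ed using Sym2.inductionOn with
    | hf a b =>
      simp only [Sym2.map_pair_eq, Sym2.eq_iff] at heq
      rcases heq with ⟨h1, h2⟩ | ⟨h1, h2⟩
      · obtain ⟨hm, hlt, he⟩ := eq_three_of_two H h1
        exact ⟨he ▸ hm, he ▸ hlt⟩
      · rcases two_shape H c b with hs | hs
        · obtain ⟨hm, hlt, he⟩ := eq_three_of_two H h2
          exact ⟨he ▸ hm, he ▸ hlt⟩
        · rcases two_shape H c a with hs' | hs' <;> omega

theorem dbl_emb₀ (H : NEStruct n) (c : ℕ) : IndEmb (fun m => 3 * m) H (dbl H c) := by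
  refine ⟨?_, ?_, ?_, ?_, ?_⟩
  · intro m hm
    exact Finset.mem_union_left _ (Finset.mem_image_of_mem _ hm)
  · intro a _ b _ h
    show 3 * a < 3 * b
    omega
  · intro x hx
    exact ⟨fun hxU => Finset.mem_union_left _ (Finset.mem_image_of_mem _ hxU),
      fun hmem => dbl_Uback H c (fun m => Or.inl rfl) x hmem⟩
  · intro x hx y hy
    constructor
    · intro hmem
      refine Finset.mem_union_left _ ?_
      rw [← Sym2.map_pair_eq]
      exact Finset.mem_image_of_mem _ hmem
    · exact dbl_Xback H c (fun m => Or.inl rfl) x y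
  · intro i x hx
    show 3 * H.h i x = (dbl H c).h i (3 * x)
    have h3 : (3 * x) % 3 = 0 := by omega
    have hdiv : 3 * x / 3 = x := by omega
    simp only [dbl]
    rw [if_pos h3, hdiv]

theorem dbl_emb₁ (hn : 1 ≤ n) {e : Fin (2 * n) → Bool} {H : NEStruct n}
    (hK : InK n e H) (c : ℕ) : IndEmb (two H c) H (dbl H c) := by
  have hgood := good_of_inK hn hK
  refine ⟨?_, ?_, ?_, ?_, ?_⟩
  · intro m hm
    exact Finset.mem_union_right _ (Finset.mem_image_of_mem _ hm)
  · exact two_monoOn H c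
  · intro x hx
    exact ⟨fun hxU => Finset.mem_union_right _ (Finset.mem_image_of_mem _ hxU),
      fun hmem => dbl_Uback H c (two_shape H c) x hmem⟩
  · intro x hx y hy
    constructor
    · intro hmem
      refine Finset.mem_union_right _ ?_
      rw [← Sym2.map_pair_eq]
      exact Finset.mem_image_of_mem _ hmem
    · exact dbl_Xback H c (two_shape H c) x y
  · intro i x hx
    show two H c (H.h i x) = (dbl H c).h i (two H c x)
    by_cases hcase : x ∈ H.V ∧ x < c
    · have htwo : two H c x = 3 * x := two_eq_of H hcase.1 hcase.2
      have hhx : H.h i x ∈ H.V := (hgood x hx hcase.1).1 i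
      have hhlt : H.h i x < c :=
        lt_of_le_of_lt (selLe hn (hgood x hx hcase.1).2.1 (hgood x hx hcase.1).2.2 i) hcase.2
      rw [htwo, two_eq_of H hhx hhlt]
      have h3 : (3 * x) % 3 = 0 := by omega
      have hdiv : 3 * x / 3 = x := by omega
      simp only [dbl]
      rw [if_pos h3, hdiv]
    · have htwo : two H c x = 3 * x + 1 + 3 * (H.V.sup id) := two_eq_of_not H hcase
      rw [htwo]
      have h3 : ¬ ((3 * x + 1 + 3 * (H.V.sup id)) % 3 = 0) := by omega
      have hdiv : (3 * x + 1 + 3 * (H.V.sup id) - 1 - 3 * (H.V.sup id)) / 3 = x := by omega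
      simp only [dbl]
      rw [if_neg h3, hdiv]

theorem dbl_isPlus (hn : 1 ≤ n) {e : Fin (2 * n) → Bool} {H : NEStruct n}
    (hK : InK n e H) {c : ℕ} (hc : c ∈ H.V) : H.IsPlus (dbl H c) c := by
  refine ⟨hc, fun m => 3 * m, two H c, dbl_emb₀ H c, dbl_emb₁ hn hK c, rfl, ?_, ?_, rfl⟩
  · intro y hy hyc
    exact (two_eq_of H hy hyc).symm
  · intro y hy hcy z hz hcz
    have h1 : y ≤ H.V.sup id := le_supV H hy
    have h2 : two H c z = 3 * z + 1 + 3 * (H.V.sup id) :=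
      two_eq_of_not H (by intro hh; exact absurd hh.2 (by omega))
    show 3 * y < two H c z
    omega

theorem dbl_inK (hn : 1 ≤ n) {e : Fin (2 * n) → Bool} {H : NEStruct n}
    (hK : InK n e H) {c : ℕ} (hc : c ∈ H.V) : InK n e (dbl H c) :=
  InK.plus hK (dbl_isPlus hn hK hc)

end NEStruct
open scoped Classical in
/-- Lemma 7, key step: if `q₀`, `q₁` are conditions of `Q` with vertex sets
`V ∪ V⁰`, `V ∪ V¹` where `V < V⁰ < V¹`, which are isomorphic via the (unique) order
isomorphism `g` fixing `V`, then `q₀` and `q₁` are compatible: their coordinatewise union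
is a condition extending both. -/
theorem statement12 (n : ℕ) (hn : 1 ≤ n) (e : Fin (2 * n) → Bool)
    (he : (Finset.univ.filter (fun i => e i = false)).card = n)
    (lam : Cardinal.{0}) (hinf : ℵ₀ ≤ lam) (hpow : lam ^< lam = lam)
    (q₀ q₁ : QStruct n ((Order.succ lam).ord).ToType)
    (hq₀ : IsCond n e lam q₀) (hq₁ : IsCond n e lam q₁)
    (V V0 V1 : Set ((Order.succ lam).ord).ToType)
    (hV₀ : q₀.V = V ∪ V0) (hV₁ : q₁.V = V ∪ V1)
    (hVV0 : ∀ a ∈ V, ∀ b ∈ V0, a < b)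
    (hV0V1 : ∀ a ∈ V0, ∀ b ∈ V1, a < b)
    (hVV1 : ∀ a ∈ V, ∀ b ∈ V1, a < b)
    (g : ((Order.succ lam).ord).ToType → ((Order.succ lam).ord).ToType)
    (hgmono : StrictMonoOn g q₀.V) (hgV : g '' q₀.V = q₁.V)
    (hgfix : ∀ v ∈ V, g v = v)
    (hgU : ∀ x ∈ q₀.V, (x ∈ q₀.U ↔ g x ∈ q₁.U))
    (hgX : ∀ x ∈ q₀.U, ∀ y ∈ q₀.U, (s(x, y) ∈ q₀.X ↔ s(g x, g y) ∈ q₁.X))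
    (hgh : ∀ i, ∀ x ∈ q₀.U, g (q₀.h i x) = q₁.h i (g x)) :
    IsCond n e lam
      (⟨q₀.V ∪ q₁.V, q₀.U ∪ q₁.U, q₀.X ∪ q₁.X,
        fun i x => if x ∈ q₀.U then q₀.h i x else q₁.h i x⟩ : QStruct n _) ∧
    QLe (⟨q₀.V ∪ q₁.V, q₀.U ∪ q₁.U, q₀.X ∪ q₁.X,
        fun i x => if x ∈ q₀.U then q₀.h i x else q₁.h i x⟩ : QStruct n _) q₀ ∧
    QLe (⟨q₀.V ∪ q₁.V, q₀.U ∪ q₁.U, q₀.X ∪ q₁.X,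
        fun i x => if x ∈ q₀.U then q₀.h i x else q₁.h i x⟩ : QStruct n _) q₁ := by

  classical
  obtain ⟨hcard₀, hU₀, hXU₀, hXD₀, hh₀, hfin₀⟩ := hq₀
  obtain ⟨hcard₁, hU₁, hXU₁, hXD₁, hh₁, hfin₁⟩ := hq₁
  -- basic disjointness facts
  have hd00 : ∀ a ∈ V, a ∉ V0 := fun a h h' => lt_irrefl a (hVV0 a h a h')
  have hd01 : ∀ a ∈ V, a ∉ V1 := fun a h h' => lt_irrefl a (hVV1 a h a h')
  have hd11 : ∀ a ∈ V0, a ∉ V1 := fun a h h' => lt_irrefl a (hV0V1 a h a h')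
  have hsubV0 : V ⊆ q₀.V := hV₀ ▸ Set.subset_union_left
  have hsubV1 : V ⊆ q₁.V := hV₁ ▸ Set.subset_union_left
  have hnotV1 : ∀ x ∈ q₀.V, x ∉ V1 := by
    intro x hx hx1
    rw [hV₀] at hx
    rcases hx with h | h
    · exact hd01 x h hx1
    · exact hd11 x h hx1
  have hnotV0 : ∀ x ∈ q₁.V, x ∉ V0 := by
    intro x hx hx0
    rw [hV₁] at hx
    rcases hx with h | h
    · exact hd00 x h hx0
    · exact hd11 x hx0 h
  have hUV : ∀ x ∈ V, (x ∈ q₀.U ↔ x ∈ q₁.U) := by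
    intro x hx
    have := hgU x (hsubV0 hx)
    rwa [hgfix x hx] at this
  have hU10 : ∀ x ∈ q₁.U, x ∈ q₀.V → x ∈ q₀.U := by
    intro x hx hxv
    have hx1 : x ∈ q₁.V := hU₁ hx
    rw [hV₁] at hx1
    rcases hx1 with h | h
    · exact (hUV x h).mpr hx
    · exact absurd h (hnotV1 x hxv)
  have hU01 : ∀ x ∈ q₀.U, x ∈ q₁.V → x ∈ q₁.U := by
    intro x hx hxv
    have hx0 : x ∈ q₀.V := hU₀ hx
    rw [hV₁] at hxv
    rcases hxv with h | h
    · exact (hUV x h).mp hx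
    · exact absurd h (hnotV1 x hx0)
  have hUcapV : ∀ x, x ∈ q₀.U → x ∈ q₁.U → x ∈ V := by
    intro x hx0 hx1
    have h0 : x ∈ q₀.V := hU₀ hx0
    have h1 : x ∈ q₁.V := hU₁ hx1
    rw [hV₁] at h1
    rcases h1 with h | h
    · exact h
    · exact absurd h (hnotV1 x h0)
  have hheq : ∀ x ∈ V, x ∈ q₀.U → ∀ i, q₀.h i x = q₁.h i x := by
    intro x hx hxU i
    obtain ⟨hmem, hmono, hlast⟩ := hh₀ x hxU
    have hlex : q₀.h i x ≤ x := selLe hn hmono hlast i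
    have hin : q₀.h i x ∈ V := by
      have := hmem i
      rw [hV₀] at this
      rcases this with h | h
      · exact h
      · exact absurd hlex (not_le.mpr (hVV0 x hx _ h))
    have h1 : g (q₀.h i x) = q₁.h i (g x) := hgh i x hxU
    rw [hgfix _ hin, hgfix x hx] at h1
    exact h1
  have hXeq : ∀ x ∈ V, ∀ y ∈ V, x ∈ q₀.U → y ∈ q₀.U →
      (s(x, y) ∈ q₀.X ↔ s(x, y) ∈ q₁.X) := by
    intro x hx y hy hxU hyU
    have := hgX x hxU y hyU
    rwa [hgfix x hx, hgfix y hy] at this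
  have hedge10 : ∀ ed ∈ q₁.X, (∀ v ∈ ed, v ∈ q₀.V) → ed ∈ q₀.X := by
    intro ed hed hv
    induction ed using Sym2.inductionOn with
    | hf a b =>
      have ha1 : a ∈ q₁.U := hXU₁ _ hed a (Sym2.mem_mk_left a b)
      have hb1 : b ∈ q₁.U := hXU₁ _ hed b (Sym2.mem_mk_right a b)
      have ha0 : a ∈ q₀.U := hU10 a ha1 (hv a (Sym2.mem_mk_left a b))
      have hb0 : b ∈ q₀.U := hU10 b hb1 (hv b (Sym2.mem_mk_right a b))
      exact (hXeq a (hUcapV a ha0 ha1) b (hUcapV b hb0 hb1) ha0 hb0).mpr hed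
  have hedge01 : ∀ ed ∈ q₀.X, (∀ v ∈ ed, v ∈ q₁.V) → ed ∈ q₁.X := by
    intro ed hed hv
    induction ed using Sym2.inductionOn with
    | hf a b =>
      have ha0 : a ∈ q₀.U := hXU₀ _ hed a (Sym2.mem_mk_left a b)
      have hb0 : b ∈ q₀.U := hXU₀ _ hed b (Sym2.mem_mk_right a b)
      have ha1 : a ∈ q₁.U := hU01 a ha0 (hv a (Sym2.mem_mk_left a b))
      have hb1 : b ∈ q₁.U := hU01 b hb0 (hv b (Sym2.mem_mk_right a b))
      exact (hXeq a (hUcapV a ha0 ha1) b (hUcapV b hb0 hb1) ha0 hb0).mp hed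
  refine ⟨⟨?_, ?_, ?_, ?_, ?_, ?_⟩, ⟨?_, ?_, ?_, ?_⟩, ⟨?_, ?_, ?_, ?_⟩⟩
  · -- cardinality
    exact lt_of_le_of_lt (Cardinal.mk_union_le _ _) (Cardinal.add_lt_of_lt hinf hcard₀ hcard₁)
  · -- U ⊆ V
    exact Set.union_subset_union hU₀ hU₁
  · -- X vertices in U
    intro ed hed v hv
    rcases hed with h | h
    · exact Or.inl (hXU₀ ed h v hv)
    · exact Or.inr (hXU₁ ed h v hv)
  · -- loopless
    intro ed hed
    rcases hed with h | h
    · exact hXD₀ ed h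
    · exact hXD₁ ed h
  · -- selector clause
    intro x hx
    rcases Classical.em (x ∈ q₀.U) with hx0 | hx0
    · have hfun : ∀ i : Fin n, (if x ∈ q₀.U then q₀.h i x else q₁.h i x) = q₀.h i x :=
        fun i => if_pos hx0
      obtain ⟨hmem, hmono, hlast⟩ := hh₀ x hx0
      refine ⟨fun i => ?_, ?_, fun i hi => ?_⟩
      · show (if x ∈ q₀.U then q₀.h i x else q₁.h i x) ∈ q₀.V ∪ q₁.V
        rw [hfun i]; exact Or.inl (hmem i)
      · show StrictMono (fun i : Fin n => if x ∈ q₀.U then q₀.h i x else q₁.h i x)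
        simp only [hfun]; exact hmono
      · show (if x ∈ q₀.U then q₀.h i x else q₁.h i x) = x
        rw [hfun i]; exact hlast i hi
    · have hx1 : x ∈ q₁.U := hx.resolve_left hx0
      have hfun : ∀ i : Fin n, (if x ∈ q₀.U then q₀.h i x else q₁.h i x) = q₁.h i x :=
        fun i => if_neg hx0
      obtain ⟨hmem, hmono, hlast⟩ := hh₁ x hx1
      refine ⟨fun i => ?_, ?_, fun i hi => ?_⟩
      · show (if x ∈ q₀.U then q₀.h i x else q₁.h i x) ∈ q₀.V ∪ q₁.V
        rw [hfun i]; exact Or.inr (hmem i)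
      · show StrictMono (fun i : Fin n => if x ∈ q₀.U then q₀.h i x else q₁.h i x)
        simp only [hfun]; exact hmono
      · show (if x ∈ q₀.U then q₀.h i x else q₁.h i x) = x
        rw [hfun i]; exact hlast i hi
  · -- FinEmbeds
    intro s hs
    have hsV : ↑s ⊆ q₀.V ∪ q₁.V := hs
    haveI hne : Nonempty ((Order.succ lam).ord).ToType := by
      rw [Ordinal.toType_nonempty_iff_ne_zero, ne_eq, Cardinal.ord_eq_zero]
      intro h0
      have : (0 : Cardinal) < Order.succ lam := lt_of_lt_of_le
        (lt_of_lt_of_le Cardinal.aleph0_pos hinf) (Order.le_succ lam)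
      rw [h0] at this
      exact lt_irrefl _ this
    -- the inverse of g on q₀.V
    set ginv := Function.invFunOn g q₀.V with hginvdef
    have hginj : Set.InjOn g q₀.V := hgmono.injOn
    have hginv_spec : ∀ b ∈ q₁.V, ginv b ∈ q₀.V ∧ g (ginv b) = b := by
      intro b hb
      have hb' : b ∈ g '' q₀.V := hgV ▸ hb
      obtain ⟨a, ha, hab⟩ := hb'
      exact ⟨Function.invFunOn_mem ⟨a, ha, hab⟩, Function.invFunOn_eq ⟨a, ha, hab⟩⟩
    have hginv_g : ∀ a ∈ q₀.V, ginv (g a) = a := fun a ha => hginj.leftInvOn_invFunOn ha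
    have hginvV : ∀ b ∈ V, ginv b = b := by
      intro b hb
      have h1 : g b = b := hgfix b hb
      have := hginv_g b (hsubV0 hb)
      rwa [h1] at this
    have hginvV1 : ∀ b ∈ V1, ginv b ∈ V0 := by
      intro b hb
      have hbq : b ∈ q₁.V := hV₁ ▸ Or.inr hb
      obtain ⟨hmem, hgb⟩ := hginv_spec b hbq
      rw [hV₀] at hmem
      rcases hmem with h | h
      · exfalso
        have h2 : g (ginv b) = ginv b := hgfix _ h
        rw [hgb] at h2
        exact hd01 b (h2 ▸ h) hb
      · exact h
    have hginvmono : ∀ a ∈ q₁.V, ∀ b ∈ q₁.V, a < b → ginv a < ginv b := by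
      intro a ha b hb hab
      obtain ⟨ha', hga⟩ := hginv_spec a ha
      obtain ⟨hb', hgb⟩ := hginv_spec b hb
      rcases lt_trichotomy (ginv a) (ginv b) with h | h | h
      · exact h
      · exfalso
        have : a = b := by rw [← hga, h, hgb]
        exact absurd this (ne_of_lt hab)
      · exfalso
        have h2 := hgmono hb' ha' h
        rw [hga, hgb] at h2
        exact absurd hab (not_lt.mpr (le_of_lt h2))
    -- the finite set s' inside q₀.V
    set s' : Finset ((Order.succ lam).ord).ToType :=
      s.filter (fun a => a ∈ q₀.V) ∪ (s.filter (fun a => a ∈ V1)).image ginv with hs'def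
    have hmem_s'_of : ∀ x ∈ s, x ∉ V1 → x ∈ q₀.V ∧ x ∈ s' := by
      intro x hx hx1
      have hxv : x ∈ q₀.V := by
        rcases hsV (Finset.mem_coe.mpr hx) with h | h
        · exact h
        · rw [hV₁] at h
          rcases h with h | h
          · exact hsubV0 h
          · exact absurd h hx1
      exact ⟨hxv, Finset.mem_union_left _ (Finset.mem_filter.mpr ⟨hx, hxv⟩)⟩
    have hmem_s'_V1 : ∀ x ∈ s, x ∈ V1 → ginv x ∈ s' := by
      intro x hx hx1
      exact Finset.mem_union_right _
        (Finset.mem_image_of_mem ginv (Finset.mem_filter.mpr ⟨hx, hx1⟩))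
    have hs'sub : ↑s' ⊆ q₀.V := by
      intro a ha
      have ha' : a ∈ s' := Finset.mem_coe.mp ha
      rw [hs'def] at ha'
      rcases Finset.mem_union.mp ha' with h | h
      · exact (Finset.mem_filter.mp h).2
      · obtain ⟨b, hb, rfl⟩ := Finset.mem_image.mp h
        have hb1 : b ∈ V1 := (Finset.mem_filter.mp hb).2
        exact (hginv_spec b (hV₁ ▸ Or.inr hb1)).1
    obtain ⟨H, f, hK, hfmono, hfV, hfU, hfX⟩ := hfin₀ s' hs'sub
    by_cases hT : ∃ a ∈ s', a ∈ V0
    · -- main case: build the edgeless amalgamation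
      obtain ⟨a₀, ha₀, ha₀V0⟩ := hT
      have hTne : (s'.filter (fun a => a ∈ V0)).Nonempty :=
        ⟨a₀, Finset.mem_filter.mpr ⟨ha₀, ha₀V0⟩⟩
      set m := (s'.filter (fun a => a ∈ V0)).min' hTne with hmdef
      have hmT := (s'.filter (fun a => a ∈ V0)).min'_mem hTne
      have hms' : m ∈ s' := (Finset.mem_filter.mp hmT).1
      have hmV0 : m ∈ V0 := (Finset.mem_filter.mp hmT).2
      set c := f m with hcdef
      have hcV : c ∈ H.V := hfV m hms'
      set N := H.V.sup id with hNdef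
      have hlt_c : ∀ x ∈ s', x ∈ V → f x < c := by
        intro x hxs hxV
        exact hfmono (Finset.mem_coe.mpr hxs) (Finset.mem_coe.mpr hms') (hVV0 x hxV m hmV0)
      have hge_c : ∀ x ∈ s', x ∈ V0 → c ≤ f x := by
        intro x hxs hx0
        have hmx : m ≤ x :=
          Finset.min'_le _ x (Finset.mem_filter.mpr ⟨hxs, hx0⟩)
        exact hfmono.monotoneOn (Finset.mem_coe.mpr hms') (Finset.mem_coe.mpr hxs) hmx
      have hK' := NEStruct.dbl_inK hn hK hcV
      have e₀ := NEStruct.dbl_emb₀ H c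
      have e₁ := NEStruct.dbl_emb₁ hn hK c
      set F : ((Order.succ lam).ord).ToType → ℕ :=
        fun a => if a ∈ V1 then NEStruct.two H c (f (ginv a)) else 3 * f a with hFdef
      have hF0 : ∀ a, a ∉ V1 → F a = 3 * f a := fun a h => if_neg h
      have hF1 : ∀ a, a ∈ V1 → F a = NEStruct.two H c (f (ginv a)) := fun a h => if_pos h
      have hgec' : ∀ x ∈ s, x ∈ V1 → c ≤ f (ginv x) :=
        fun x hx hx1 => hge_c _ (hmem_s'_V1 x hx hx1) (hginvV1 x hx1)
      have hF1' : ∀ x ∈ s, x ∈ V1 → F x = 3 * f (ginv x) + 1 + 3 * N := by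
        intro x hx hx1
        rw [hF1 x hx1]
        exact NEStruct.two_eq_of_not H
          (fun hh => absurd hh.2 (not_lt.mpr (hgec' x hx hx1)))
      -- processed data for points satisfying the hypotheses of the embedding clauses
      have hproc : ∀ x ∈ s,
          (x ∈ q₀.U ∪ q₁.U ∧ ∀ i : Fin n, (if x ∈ q₀.U then q₀.h i x else q₁.h i x) ∈ s) →
          ∃ x', x' ∈ s' ∧ x' ∈ q₀.U ∧ (∀ i, q₀.h i x' ∈ s') ∧ f x' ∈ H.U ∧
            (∀ i, f (q₀.h i x') = H.h i (f x')) ∧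
            ((x ∉ V1 ∧ x' = x) ∨ (x ∈ V1 ∧ x' = ginv x ∧ x' ∈ V0 ∧ g x' = x ∧ x ∈ q₁.U)) := by
        intro x hx hyp
        by_cases hx1 : x ∈ V1
        · have hxnot0 : x ∉ q₀.U := fun h => hnotV1 x (hU₀ h) hx1
          have hxU1 : x ∈ q₁.U := hyp.1.resolve_left hxnot0
          have hx's' : ginv x ∈ s' := hmem_s'_V1 x hx hx1
          have hx'V0 : ginv x ∈ V0 := hginvV1 x hx1
          have hx'q0V : ginv x ∈ q₀.V := hV₀ ▸ Or.inr hx'V0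
          have hgx' : g (ginv x) = x := (hginv_spec x (hV₁ ▸ Or.inr hx1)).2
          have hx'U : ginv x ∈ q₀.U := by
            refine (hgU _ hx'q0V).mpr ?_
            rw [hgx']
            exact hxU1
          have hrep : ∀ i, q₀.h i (ginv x) = ginv (q₁.h i x) := by
            intro i
            have h1 : g (q₀.h i (ginv x)) = q₁.h i x := by rw [hgh i _ hx'U, hgx']
            have h2 : q₀.h i (ginv x) ∈ q₀.V := (hh₀ _ hx'U).1 i
            rw [← h1, hginv_g _ h2]
          have hcloS : ∀ i, q₁.h i x ∈ s := by
            intro i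
            have h1 := hyp.2 i
            rwa [if_neg hxnot0] at h1
          have hclo' : ∀ i, q₀.h i (ginv x) ∈ s' := by
            intro i
            by_cases hh1 : q₁.h i x ∈ V1
            · rw [hrep i]
              exact hmem_s'_V1 _ (hcloS i) hh1
            · have hv : q₁.h i x ∈ V := by
                have h1 := (hh₁ x hxU1).1 i
                rw [hV₁] at h1
                exact h1.resolve_right hh1
              have h2 : q₀.h i (ginv x) = q₁.h i x := by rw [hrep i, hginvV _ hv]
              rw [h2]
              exact (hmem_s'_of _ (hcloS i) hh1).2
          have hkey := hfU (ginv x) hx's' ⟨hx'U, hclo'⟩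
          exact ⟨ginv x, hx's', hx'U, hclo', hkey.1, hkey.2,
            Or.inr ⟨hx1, rfl, hx'V0, hgx', hxU1⟩⟩
        · have hx0V : x ∈ q₀.V := (hmem_s'_of x hx hx1).1
          have hxs' : x ∈ s' := (hmem_s'_of x hx hx1).2
          have hx0 : x ∈ q₀.U := by
            rcases hyp.1 with h | h
            · exact h
            · exact hU10 x h hx0V
          have hclo' : ∀ i, q₀.h i x ∈ s' := by
            intro i
            have h1 := hyp.2 i
            rw [if_pos hx0] at h1
            exact (hmem_s'_of _ h1 (hnotV1 _ ((hh₀ x hx0).1 i))).2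
          have hkey := hfU x hxs' ⟨hx0, hclo'⟩
          exact ⟨x, hxs', hx0, hclo', hkey.1, hkey.2, Or.inl ⟨hx1, rfl⟩⟩
      refine ⟨NEStruct.dbl H c, F, hK', ?_, ?_, ?_, ?_⟩
      · -- strict monotonicity of F on s
        intro a ha b hb hab
        have ha' : a ∈ s := Finset.mem_coe.mp ha
        have hb' : b ∈ s := Finset.mem_coe.mp hb
        by_cases ha1 : a ∈ V1 <;> by_cases hb1 : b ∈ V1
        · show F a < F b
          rw [hF1 a ha1, hF1 b hb1]
          have has' := hmem_s'_V1 a ha' ha1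
          have hbs' := hmem_s'_V1 b hb' hb1
          refine NEStruct.two_monoOn H c (Finset.mem_coe.mpr (hfV _ has'))
            (Finset.mem_coe.mpr (hfV _ hbs')) ?_
          refine hfmono (Finset.mem_coe.mpr has') (Finset.mem_coe.mpr hbs') ?_
          exact hginvmono a (hV₁ ▸ Or.inr ha1) b (hV₁ ▸ Or.inr hb1) hab
        · exfalso
          have hbv : b ∈ q₀.V := (hmem_s'_of b hb' hb1).1
          have : b < a := by
            rw [hV₀] at hbv
            rcases hbv with h | h
            · exact hVV1 b h a ha1
            · exact hV0V1 b h a ha1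
          exact absurd hab (not_lt.mpr (le_of_lt this))
        · show F a < F b
          rw [hF0 a ha1, hF1' b hb' hb1]
          have hfa : f a ≤ N := NEStruct.le_supV H (hfV a (hmem_s'_of a ha' ha1).2)
          omega
        · show F a < F b
          rw [hF0 a ha1, hF0 b hb1]
          have := hfmono (Finset.mem_coe.mpr (hmem_s'_of a ha' ha1).2)
            (Finset.mem_coe.mpr (hmem_s'_of b hb' hb1).2) hab
          omega
      · -- F maps s into the vertex set
        intro x hx
        by_cases hx1 : x ∈ V1
        · rw [hF1 x hx1]
          exact Finset.mem_union_right _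
            (Finset.mem_image_of_mem _ (hfV _ (hmem_s'_V1 x hx hx1)))
        · rw [hF0 x hx1]
          exact Finset.mem_union_left _
            (Finset.mem_image_of_mem _ (hfV _ (hmem_s'_of x hx hx1).2))
      · -- the U / h clause
        intro x hx hyp
        obtain ⟨x', hx's', hx'U, hclo', hfxU, hfxh, hcases⟩ := hproc x hx hyp
        rcases hcases with ⟨hx1, hxe0⟩ | ⟨hx1, hxe, hx'V0, hgx', hxU1⟩
        · -- x ∉ V1
          rw [hxe0] at hx's' hx'U hclo' hfxU hfxh
          have hx0 : x ∈ q₀.U := hx'U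
          constructor
          · show F x ∈ (NEStruct.dbl H c).U
            rw [hF0 x hx1]
            exact Finset.mem_union_left _ (Finset.mem_image_of_mem _ hfxU)
          · intro i
            show F (if x ∈ q₀.U then q₀.h i x else q₁.h i x) = (NEStruct.dbl H c).h i (F x)
            have he : 3 * H.h i (f x) = (NEStruct.dbl H c).h i (3 * f x) := e₀.2.2.2.2 i (f x) hfxU
            rw [if_pos hx0, hF0 x hx1, ← he,
              hF0 _ (hnotV1 _ ((hh₀ x hx0).1 i)), hfxh i]
        · -- x ∈ V1
          have hxnot0 : x ∉ q₀.U := fun h => hnotV1 x (hU₀ h) hx1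
          constructor
          · show F x ∈ (NEStruct.dbl H c).U
            rw [hF1 x hx1, ← hxe]
            exact Finset.mem_union_right _ (Finset.mem_image_of_mem _ hfxU)
          · intro i
            show F (if x ∈ q₀.U then q₀.h i x else q₁.h i x) = (NEStruct.dbl H c).h i (F x)
            have he : NEStruct.two H c (H.h i (f x')) = (NEStruct.dbl H c).h i (NEStruct.two H c (f x')) :=
              e₁.2.2.2.2 i (f x') hfxU
            have hrep : q₀.h i x' = ginv (q₁.h i x) := by
              have h1 : g (q₀.h i x') = q₁.h i x := by rw [hgh i _ hx'U, hgx']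
              have h2 : q₀.h i x' ∈ q₀.V := (hh₀ _ hx'U).1 i
              rw [← h1, hginv_g _ h2]
            rw [if_neg hxnot0, hF1 x hx1, ← hxe, ← he, ← hfxh i]
            by_cases hh1 : q₁.h i x ∈ V1
            · rw [hF1 _ hh1, hrep]
            · have hv : q₁.h i x ∈ V := by
                have h1 := (hh₁ x hxU1).1 i
                rw [hV₁] at h1
                exact h1.resolve_right hh1
              have heqq : q₀.h i x' = q₁.h i x := by rw [hrep, hginvV _ hv]
              rw [hF0 _ hh1, ← heqq,
                NEStruct.two_eq_of H (hfV _ (hclo' i)) (hlt_c _ (hclo' i) (heqq ▸ hv))]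
      · -- the X clause
        intro x hx y hy hpx hpy
        obtain ⟨x', hx's', hx'U, hclox, hfxU, hfxh, hcx⟩ := hproc x hx hpx
        obtain ⟨y', hy's', hy'U, hcloy, hfyU, hfyh, hcy⟩ := hproc y hy hpy
        show s(x, y) ∈ q₀.X ∪ q₁.X ↔ s(F x, F y) ∈ (NEStruct.dbl H c).X
        have hnoq0 : ∀ w z : ((Order.succ lam).ord).ToType, z ∈ V1 → s(w, z) ∉ q₀.X := by
          intro w z hz1 hmem
          exact hnotV1 z (hU₀ (hXU₀ _ hmem z (Sym2.mem_mk_right w z))) hz1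
        rcases hcx with ⟨hx1, hxe0⟩ | ⟨hx1, hxe, hx'V0, hgx', hxU1⟩ <;>
          [rw [hxe0] at hx's' hx'U hclox hfxU hfxh; skip] <;>
          rcases hcy with ⟨hy1, hye0⟩ | ⟨hy1, hye, hy'V0, hgy', hyU1⟩ <;>
          [rw [hye0] at hy's' hy'U hcloy hfyU hfyh; skip; rw [hye0] at hy's' hy'U hcloy hfyU hfyh; skip]
        · -- both outside V1
          have hiff1 : s(x, y) ∈ q₀.X ∪ q₁.X ↔ s(x, y) ∈ q₀.X := by
            constructor
            · rintro (h | h)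
              · exact h
              · refine hedge10 _ h ?_
                intro v hv
                rcases Sym2.mem_iff.mp hv with rfl | rfl
                · exact (hmem_s'_of v hx hx1).1
                · exact (hmem_s'_of v hy hy1).1
            · exact Or.inl
          rw [hiff1, hF0 x hx1, hF0 y hy1]
          exact Iff.trans (hfX x hx's' y hy's' ⟨hx'U, hclox⟩ ⟨hy'U, hcloy⟩)
            (e₀.2.2.2.1 (f x) hfxU (f y) hfyU)
        · -- x outside V1, y ∈ V1
          have hx0V : x ∈ q₀.V := (hmem_s'_of x hx hx1).1
          rcases (hV₀ ▸ hx0V : x ∈ V ∪ V0) with hxV | hxV0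
          · -- x ∈ V
            have hxU1' : x ∈ q₁.U ∨ True := Or.inr trivial
            have hiff1 : s(x, y) ∈ q₀.X ∪ q₁.X ↔ s(x, y) ∈ q₁.X := by
              constructor
              · rintro (h | h)
                · exact absurd h (hnoq0 x y hy1)
                · exact h
              · exact Or.inr
            have hiff2 : s(x, y) ∈ q₁.X ↔ s(x, y') ∈ q₀.X := by
              have := hgX x hx'U y' hy'U
              rw [hgfix x hxV, hgy'] at this
              exact this.symm
            rw [hiff1, hiff2, hF0 x hx1, hF1 y hy1, ← hye,
              ← NEStruct.two_eq_of H (hfV x hx's') (hlt_c x hx's' hxV)]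
            exact Iff.trans (hfX x hx's' y' hy's' ⟨hx'U, hclox⟩ ⟨hy'U, hcloy⟩)
              (e₁.2.2.2.1 (f x) hfxU (f y') hfyU)
          · -- x ∈ V0 : both sides are false
            refine iff_of_false ?_ ?_
            · rintro (h | h)
              · exact hnoq0 x y hy1 h
              · exact hnotV0 x (hU₁ (hXU₁ _ h x (Sym2.mem_mk_left x y))) hxV0
            · intro hmem
              rw [hF0 x hx1, hF1' y hy hy1] at hmem
              have hcross := NEStruct.dbl_X_cross H c hmem (by omega)
              exact absurd hcross.2 (not_lt.mpr (hge_c x hx's' hxV0))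
        · -- x ∈ V1, y outside V1 : symmetric
          rw [show s(x, y) = s(y, x) from Sym2.eq_swap,
            show s(F x, F y) = s(F y, F x) from Sym2.eq_swap]
          have hy0V : y ∈ q₀.V := (hmem_s'_of y hy hy1).1
          rcases (hV₀ ▸ hy0V : y ∈ V ∪ V0) with hyV | hyV0
          · have hiff1 : s(y, x) ∈ q₀.X ∪ q₁.X ↔ s(y, x) ∈ q₁.X := by
              constructor
              · rintro (h | h)
                · exact absurd h (hnoq0 y x hx1)
                · exact h
              · exact Or.inr
            have hiff2 : s(y, x) ∈ q₁.X ↔ s(y, x') ∈ q₀.X := by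
              have := hgX y hy'U x' hx'U
              rw [hgfix y hyV, hgx'] at this
              exact this.symm
            rw [hiff1, hiff2, hF0 y hy1, hF1 x hx1, ← hxe,
              ← NEStruct.two_eq_of H (hfV y hy's') (hlt_c y hy's' hyV)]
            exact Iff.trans (hfX y hy's' x' hx's' ⟨hy'U, hcloy⟩ ⟨hx'U, hclox⟩)
              (e₁.2.2.2.1 (f y) hfyU (f x') hfxU)
          · refine iff_of_false ?_ ?_
            · rintro (h | h)
              · exact hnoq0 y x hx1 h
              · exact hnotV0 y (hU₁ (hXU₁ _ h y (Sym2.mem_mk_left y x))) hyV0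
            · intro hmem
              rw [hF0 y hy1, hF1' x hx hx1] at hmem
              have hcross := NEStruct.dbl_X_cross H c hmem (by omega)
              exact absurd hcross.2 (not_lt.mpr (hge_c y hy's' hyV0))
        · -- both in V1
          have hiff1 : s(x, y) ∈ q₀.X ∪ q₁.X ↔ s(x, y) ∈ q₁.X := by
            constructor
            · rintro (h | h)
              · exact absurd h (hnoq0 x y hy1)
              · exact h
            · exact Or.inr
          have hiff2 : s(x, y) ∈ q₁.X ↔ s(x', y') ∈ q₀.X := by
            have := hgX x' hx'U y' hy'U
            rw [hgx', hgy'] at this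
            exact this.symm
          rw [hiff1, hiff2, hF1 x hx1, hF1 y hy1, ← hxe, ← hye]
          exact Iff.trans (hfX x' hx's' y' hy's' ⟨hx'U, hclox⟩ ⟨hy'U, hcloy⟩)
            (e₁.2.2.2.1 (f x') hfxU (f y') hfyU)
    · -- degenerate case : s ⊆ q₀.V
      have hnoV1 : ∀ x ∈ s, x ∉ V1 := by
        intro x hx hx1
        exact hT ⟨ginv x, hmem_s'_V1 x hx hx1, hginvV1 x hx1⟩
      refine ⟨H, f, hK, ?_, ?_, ?_, ?_⟩
      · intro a ha b hb hab
        have ha' : a ∈ s := Finset.mem_coe.mp ha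
        have hb' : b ∈ s := Finset.mem_coe.mp hb
        exact hfmono (Finset.mem_coe.mpr (hmem_s'_of a ha' (hnoV1 a ha')).2)
          (Finset.mem_coe.mpr (hmem_s'_of b hb' (hnoV1 b hb')).2) hab
      · intro x hx
        exact hfV x (hmem_s'_of x hx (hnoV1 x hx)).2
      · intro x hx hyp
        have hx0V : x ∈ q₀.V := (hmem_s'_of x hx (hnoV1 x hx)).1
        have hx0 : x ∈ q₀.U := by
          rcases hyp.1 with h | h
          · exact h
          · exact hU10 x h hx0V
        have hclo' : ∀ i, q₀.h i x ∈ s' := by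
          intro i
          have h1 : (if x ∈ q₀.U then q₀.h i x else q₁.h i x) ∈ s := hyp.2 i
          rw [if_pos hx0] at h1
          exact (hmem_s'_of _ h1 (hnoV1 _ h1)).2
        have hkey := hfU x (hmem_s'_of x hx (hnoV1 x hx)).2 ⟨hx0, hclo'⟩
        refine ⟨hkey.1, fun i => ?_⟩
        show f (if x ∈ q₀.U then q₀.h i x else q₁.h i x) = H.h i (f x)
        rw [if_pos hx0]
        exact hkey.2 i
      · intro x hx y hy hpx hpy
        have hx0V : x ∈ q₀.V := (hmem_s'_of x hx (hnoV1 x hx)).1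
        have hy0V : y ∈ q₀.V := (hmem_s'_of y hy (hnoV1 y hy)).1
        have hx0 : x ∈ q₀.U := by
          rcases hpx.1 with h | h
          · exact h
          · exact hU10 x h hx0V
        have hy0 : y ∈ q₀.U := by
          rcases hpy.1 with h | h
          · exact h
          · exact hU10 y h hy0V
        have hclox : ∀ i, q₀.h i x ∈ s' := by
          intro i
          have h1 : (if x ∈ q₀.U then q₀.h i x else q₁.h i x) ∈ s := hpx.2 i
          rw [if_pos hx0] at h1
          exact (hmem_s'_of _ h1 (hnoV1 _ h1)).2
        have hcloy : ∀ i, q₀.h i y ∈ s' := by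
          intro i
          have h1 : (if y ∈ q₀.U then q₀.h i y else q₁.h i y) ∈ s := hpy.2 i
          rw [if_pos hy0] at h1
          exact (hmem_s'_of _ h1 (hnoV1 _ h1)).2
        show s(x, y) ∈ q₀.X ∪ q₁.X ↔ s(f x, f y) ∈ H.X
        have hiff1 : s(x, y) ∈ q₀.X ∪ q₁.X ↔ s(x, y) ∈ q₀.X := by
          constructor
          · rintro (h | h)
            · exact h
            · refine hedge10 _ h ?_
              intro v hv
              rcases Sym2.mem_iff.mp hv with rfl | rfl
              · exact hx0V
              · exact hy0V
          · exact Or.inl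
        rw [hiff1]
        exact hfX x (hmem_s'_of x hx (hnoV1 x hx)).2 y (hmem_s'_of y hy (hnoV1 y hy)).2
          ⟨hx0, hclox⟩ ⟨hy0, hcloy⟩
  · -- QLe q₀ : V
    exact Set.subset_union_left
  · -- QLe q₀ : U
    ext x
    constructor
    · intro hx
      exact ⟨Or.inl hx, hU₀ hx⟩
    · rintro ⟨hx, hxv⟩
      rcases hx with h | h
      · exact h
      · exact hU10 x h hxv
  · -- QLe q₀ : X
    ext ed
    constructor
    · intro hed
      exact ⟨Or.inl hed, fun v hv => hU₀ (hXU₀ ed hed v hv)⟩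
    · rintro ⟨hed, hv⟩
      rcases hed with h | h
      · exact h
      · exact hedge10 ed h hv
  · -- QLe q₀ : h
    intro i x hx
    exact if_pos hx
  · -- QLe q₁ : V
    exact Set.subset_union_right
  · -- QLe q₁ : U
    ext x
    constructor
    · intro hx
      exact ⟨Or.inr hx, hU₁ hx⟩
    · rintro ⟨hx, hxv⟩
      rcases hx with h | h
      · exact hU01 x h hxv
      · exact h
  · -- QLe q₁ : X
    ext ed
    constructor
    · intro hed
      exact ⟨Or.inr hed, fun v hv => hU₁ (hXU₁ ed hed v hv)⟩
    · rintro ⟨hed, hv⟩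
      rcases hed with h | h
      · exact hedge01 ed h hv
      · exact h
  · -- QLe q₁ : h
    intro i x hx
    show (if x ∈ q₀.U then q₀.h i x else q₁.h i x) = q₁.h i x
    rcases Classical.em (x ∈ q₀.U) with h0 | h0
    · rw [if_pos h0]
      exact hheq x (hUcapV x h0 hx) h0 i
    · exact if_neg h0
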